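/- Let τ₁,…,τ_s be positive rationally independent real numbers and define for each h ≥ 1 the numbers τᵢ(h) by Perron's algorithm: τ₁(h−1) = τ_s(h), τⱼ(h−1) = τ_{j−1}(h) + aⱼ(h−1)τ_s(h) for 2 ≤ j ≤ s, where aⱼ(h−1) = ⌊τⱼ(h)/τ₁(h)⌋ (with suitable indexing so all τᵢ(h) are positive and rationally independent). Let Aᵢ(h) be the nonnegative integers with τᵢ = Aᵢ(h)τ₁(h) + Aᵢ(h+1)τ₂(h) + ⋯ + Aᵢ(h+s−1)τ_s(h). Then det(Aᵢ(h+j−1))_{1≤i,j≤s} = (−1)^{h(s−1)}. -/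

import Mathlib

/-- Let `τ₁,…,τ_s` be positive rationally independent reals and run
Perron's algorithm: at each stage `h` the vector `τ(h)` of positive reals satisfies
`τ₁(h) = τ_s(h+1)` and `τⱼ(h) = τ_{j-1}(h+1) + ⌊τⱼ(h)/τ₁(h)⌋·τ₁(h)` for `2 ≤ j ≤ s`
(written here 0-indexed).  Let `Aᵢ(h)` be the nonnegative integers with
`τᵢ = Aᵢ(h)τ₁(h) + Aᵢ(h+1)τ₂(h) + ⋯ + Aᵢ(h+s-1)τ_s(h)`.  Then
`det (Aᵢ(h+j-1))_{1≤i,j≤s} = (-1)^{h(s-1)}`. -/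
theorem stmt_7 (s : ℕ) (hs : 0 < s)
    (τ : ℕ → Fin s → ℝ) (A : ℕ → Fin s → ℕ)
    (hpos : ∀ h i, 0 < τ h i)
    (hind : LinearIndependent ℚ (τ 0))
    (hrec1 : ∀ h : ℕ, τ (h + 1) ⟨s - 1, Nat.sub_lt hs Nat.one_pos⟩ = τ h ⟨0, hs⟩)
    (hrec2 : ∀ h : ℕ, ∀ i : Fin s, 0 < (i : ℕ) →
      τ h i = τ (h + 1) ⟨(i : ℕ) - 1, Nat.lt_of_le_of_lt (Nat.sub_le _ _) i.isLt⟩ +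
        (⌊τ h i / τ h ⟨0, hs⟩⌋ : ℝ) * τ h ⟨0, hs⟩)
    (hA : ∀ (h : ℕ) (i : Fin s), τ 0 i = ∑ j : Fin s, (A (h + (j : ℕ)) i : ℝ) * τ h j) :
    ∀ h : ℕ, (Matrix.det fun i j : Fin s => (A (h + (j : ℕ)) i : ℤ)) =
      (-1) ^ (h * (s - 1)) := by
  obtain ⟨t, rfl⟩ : ∃ t, s = t + 1 := ⟨s - 1, (Nat.succ_pred_eq_of_pos hs).symm⟩
  -- linear independence at every stage
  have li : ∀ h, LinearIndependent ℚ (τ h) := by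
    intro h
    rw [linearIndependent_iff_card_le_finrank_span]
    have hle : Submodule.span ℚ (Set.range (τ 0)) ≤ Submodule.span ℚ (Set.range (τ h)) := by
      rw [Submodule.span_le]
      rintro _ ⟨i, rfl⟩
      rw [hA h i]
      refine Submodule.sum_mem _ fun j _ => ?_
      have hrw : ((A (h + (j : ℕ)) i : ℝ)) * τ h j
          = ((A (h + (j : ℕ)) i : ℚ)) • τ h j := by
        rw [Rat.smul_def]; push_cast; ring
      rw [hrw]
      exact Submodule.smul_mem _ _ (Submodule.subset_span ⟨j, rfl⟩)
    haveI : Module.Finite ℚ (Submodule.span ℚ (Set.range (τ h))) :=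
      FiniteDimensional.span_of_finite ℚ (Set.finite_range _)
    calc Fintype.card (Fin (t + 1)) = (Set.range (τ 0)).finrank ℚ :=
          (finrank_span_eq_card hind).symm
      _ ≤ (Set.range (τ h)).finrank ℚ := Submodule.finrank_mono hle
  -- uniqueness of integer coefficients
  have uniq : ∀ (h : ℕ) (c : Fin (t + 1) → ℤ),
      (∑ k, (c k : ℝ) * τ h k) = 0 → ∀ k, c k = 0 := by
    intro h c hc k
    have h0 : ∑ k, ((c k : ℚ)) • τ h k = 0 := by
      rw [← hc]
      refine Finset.sum_congr rfl fun k _ => ?_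
      rw [Rat.smul_def]; push_cast; ring
    have := Fintype.linearIndependent_iff.mp (li h) (fun k => (c k : ℚ)) h0 k
    exact_mod_cast this
  have hσlast : (finRotate (t + 1)) (Fin.last t) = 0 := by
    rw [finRotate_succ_apply, Fin.last_add_one]
  have hσval : ∀ k : Fin (t + 1), k ≠ Fin.last t →
      (((finRotate (t + 1)) k : Fin (t + 1)) : ℕ) = (k : ℕ) + 1 := by
    intro k hk
    rw [finRotate_succ_apply, Fin.val_add_one, if_neg hk]
  have hσl0 : (((finRotate (t + 1)) (Fin.last t) : Fin (t + 1)) : ℕ) = 0 := by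
    rw [hσlast]; rfl
  -- the "carry" coefficients
  set d : ℕ → Fin (t + 1) → ℤ :=
    fun h k => if k = Fin.last t then 0
      else ⌊τ h ((finRotate (t + 1)) k) / τ h ⟨0, hs⟩⌋ with hd
  have key1 : ∀ (h : ℕ) (k : Fin (t + 1)),
      τ h ((finRotate (t + 1)) k) = τ (h + 1) k + (d h k : ℝ) * τ (h + 1) (Fin.last t) := by
    intro h k
    have hlast : τ (h + 1) (Fin.last t) = τ h ⟨0, hs⟩ := hrec1 h
    by_cases hk : k = Fin.last t
    · subst hk
      have h0 : (finRotate (t + 1)) (Fin.last t) = (⟨0, hs⟩ : Fin (t + 1)) := by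
        rw [hσlast]; rfl
      rw [h0, hlast]
      simp [hd]
    · have hv : (((finRotate (t + 1)) k : Fin (t + 1)) : ℕ) = (k : ℕ) + 1 := hσval k hk
      have hpos' : 0 < (((finRotate (t + 1)) k : Fin (t + 1)) : ℕ) := by omega
      rw [hrec2 h ((finRotate (t + 1)) k) hpos', hlast]
      have hidx : (⟨(((finRotate (t + 1)) k : Fin (t + 1)) : ℕ) - 1,
          Nat.lt_of_le_of_lt (Nat.sub_le _ _) ((finRotate (t + 1)) k).isLt⟩ : Fin (t + 1)) = k := by
        ext; simp [Fin.val_add_one, hk]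
      rw [hidx, hd]
      simp [hk]
  -- the key coefficient identity
  have key2 : ∀ (h : ℕ) (i : Fin (t + 1)),
      (A (h + (t + 1)) i : ℤ)
        = (A h i : ℤ)
          + ∑ m : Fin (t + 1), d h m * (A (h + (((finRotate (t + 1)) m : Fin (t + 1)) : ℕ)) i : ℤ) := by
    intro h i
    have hA2 : ∑ k : Fin (t + 1), (A (h + (((finRotate (t + 1)) k : Fin (t + 1)) : ℕ)) i : ℝ)
        * τ h ((finRotate (t + 1)) k) = τ 0 i := by
      rw [Equiv.sum_comp (finRotate (t + 1)) (fun j => (A (h + (j : ℕ)) i : ℝ) * τ h j)]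
      exact (hA h i).symm
    have hA2' : (∑ k : Fin (t + 1), (A (h + (((finRotate (t + 1)) k : Fin (t + 1)) : ℕ)) i : ℝ)
          * τ (h + 1) k)
        + ((∑ m : Fin (t + 1), d h m * (A (h + (((finRotate (t + 1)) m : Fin (t + 1)) : ℕ)) i : ℤ) : ℤ) : ℝ)
          * τ (h + 1) (Fin.last t) = τ 0 i := by
      rw [← hA2]
      rw [show ((∑ m : Fin (t + 1), d h m
            * (A (h + (((finRotate (t + 1)) m : Fin (t + 1)) : ℕ)) i : ℤ) : ℤ) : ℝ)
          * τ (h + 1) (Fin.last t)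
          = ∑ k : Fin (t + 1), ((d h k * (A (h + (((finRotate (t + 1)) k : Fin (t + 1)) : ℕ)) i : ℤ) : ℤ) : ℝ)
              * τ (h + 1) (Fin.last t) by
        rw [← Finset.sum_mul]; push_cast; ring]
      rw [← Finset.sum_add_distrib]
      refine Finset.sum_congr rfl fun k _ => ?_
      rw [key1 h k]; push_cast; ring
    have hsum : ∑ k : Fin (t + 1), ((((A (h + 1 + (k : ℕ)) i : ℤ)
          - (A (h + (((finRotate (t + 1)) k : Fin (t + 1)) : ℕ)) i : ℤ)
          - (if k = Fin.last t
              then ∑ m : Fin (t + 1), d h m * (A (h + (((finRotate (t + 1)) m : Fin (t + 1)) : ℕ)) i : ℤ)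
              else 0)) : ℤ) : ℝ) * τ (h + 1) k = 0 := by
      have expand : ∀ k : Fin (t + 1), ((((A (h + 1 + (k : ℕ)) i : ℤ)
            - (A (h + (((finRotate (t + 1)) k : Fin (t + 1)) : ℕ)) i : ℤ)
            - (if k = Fin.last t
                then ∑ m : Fin (t + 1), d h m * (A (h + (((finRotate (t + 1)) m : Fin (t + 1)) : ℕ)) i : ℤ)
                else 0)) : ℤ) : ℝ) * τ (h + 1) k
          = (A (h + 1 + (k : ℕ)) i : ℝ) * τ (h + 1) k
            - (A (h + (((finRotate (t + 1)) k : Fin (t + 1)) : ℕ)) i : ℝ) * τ (h + 1) k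
            - (if k = Fin.last t
                then ((∑ m : Fin (t + 1), d h m
                  * (A (h + (((finRotate (t + 1)) m : Fin (t + 1)) : ℕ)) i : ℤ) : ℤ) : ℝ)
                  * τ (h + 1) k
                else 0) := by
        intro k
        by_cases hk : k = Fin.last t
        · subst hk; simp only [reduceIte]; push_cast; ring
        · simp only [if_neg hk]; push_cast; ring
      rw [Finset.sum_congr rfl fun k _ => expand k]
      rw [Finset.sum_sub_distrib, Finset.sum_sub_distrib,
        Finset.sum_ite_eq' Finset.univ (Fin.last t)]
      simp only [Finset.mem_univ, if_true]
      have h1 := hA (h + 1) i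
      linarith [hA2']
    have hek := uniq (h + 1) _ hsum (Fin.last t)
    have hval : h + 1 + ((Fin.last t : Fin (t + 1)) : ℕ) = h + (t + 1) := by
      rw [Fin.val_last]; omega
    rw [if_pos rfl, hval, hσl0] at hek
    simp only [Nat.add_zero] at hek
    omega
  -- the matrices
  set M : ℕ → Matrix (Fin (t + 1)) (Fin (t + 1)) ℤ :=
    fun h => Matrix.of fun i j => (A (h + (j : ℕ)) i : ℤ) with hM
  -- base case: M 0 = 1
  have base : M 0 = 1 := by
    ext i j
    have hz : ∑ k : Fin (t + 1),
        ((((A (0 + (k : ℕ)) i : ℤ) - if k = i then 1 else 0) : ℤ) : ℝ) * τ 0 k = 0 := by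
      have expand : ∀ k : Fin (t + 1),
          ((((A (0 + (k : ℕ)) i : ℤ) - if k = i then 1 else 0) : ℤ) : ℝ) * τ 0 k
            = (A (0 + (k : ℕ)) i : ℝ) * τ 0 k - (if k = i then τ 0 k else 0) := by
        intro k; by_cases hk : k = i <;> simp [hk] <;> push_cast <;> ring
      rw [Finset.sum_congr rfl fun k _ => expand k, Finset.sum_sub_distrib,
        Finset.sum_ite_eq' Finset.univ i]
      simp only [Finset.mem_univ, if_true]
      have := hA 0 i
      linarith
    have hji := uniq 0 _ hz j
    have hji' : (A (0 + (j : ℕ)) i : ℤ) = if j = i then 1 else 0 := by omega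
    rw [hM]
    simp only [Matrix.of_apply, hji', Matrix.one_apply]
    by_cases hij : i = j <;> simp [hij, eq_comm]
  -- inductive step
  have step : ∀ h : ℕ, (M (h + 1)).det = (-1) ^ t * (M h).det := by
    intro h
    set B : Matrix (Fin (t + 1)) (Fin (t + 1)) ℤ :=
      (M h).submatrix id (finRotate (t + 1)) with hB
    have hBk : ∀ i k, B i k = (A (h + (((finRotate (t + 1)) k : Fin (t + 1)) : ℕ)) i : ℤ) := by
      intro i k; rw [hB]; simp [hM]
    have hdet := Matrix.det_updateCol_sum B (Fin.last t)
      (fun k => if k = Fin.last t then (1 : ℤ) else d h k)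
    have hMeq : M (h + 1) = B.updateCol (Fin.last t)
        (fun r => ∑ k, (if k = Fin.last t then (1 : ℤ) else d h k) • B r k) := by
      ext i k
      by_cases hk : k = Fin.last t
      · subst hk
        rw [Matrix.updateCol_self]
        have hsimp : ∀ k : Fin (t + 1),
            (if k = Fin.last t then (1 : ℤ) else d h k) • B i k
              = d h k • B i k + (if k = Fin.last t then B i k else 0) := by
          intro k
          by_cases hk' : k = Fin.last t
          · subst hk'; simp [hd]
          · simp [hk']
        rw [Finset.sum_congr rfl fun k _ => hsimp k, Finset.sum_add_distrib,
          Finset.sum_ite_eq' Finset.univ (Fin.last t)]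
        simp only [Finset.mem_univ, if_true, smul_eq_mul, hBk, hσl0, Nat.add_zero]
        rw [hM]
        simp only [Matrix.of_apply]
        rw [show h + 1 + ((Fin.last t : Fin (t + 1)) : ℕ) = h + (t + 1) by
          rw [Fin.val_last]; omega]
        rw [key2 h i]
        ring
      · rw [Matrix.updateCol_ne hk, hB]
        simp only [Matrix.submatrix_apply, id]
        rw [hM]
        simp only [Matrix.of_apply]
        rw [show h + (((finRotate (t + 1)) k : Fin (t + 1)) : ℕ) = h + 1 + (k : ℕ) by
          rw [hσval k hk]; omega]
    rw [hMeq, hdet, if_pos rfl, one_smul, hB, Matrix.det_permute', sign_finRotate]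
    push_cast
    ring
  -- conclusion by induction
  have main : ∀ h : ℕ, (M h).det = (-1) ^ (h * t) := by
    intro h
    induction h with
    | zero => simp [base]
    | succ n ih =>
        rw [step n, ih, ← pow_add]
        congr 1
        ring
  intro h
  have := main h
  simp only [hM, Nat.add_sub_cancel] at this ⊢
  exact this
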